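/- The antipodal circle A = {(a, -a) | a ∈ S¹} is a deformation retract of C^2(S¹): there is a homotopy H : C^2(S¹) × [0,1] → C^2(S¹) with H(x,0) = x, H(x,1) ∈ A for all x, and H(x,t) = x for x ∈ A and all t. -/

import Mathlib

open Set

/-- The unit circle in `ℝ²`. -/
abbrev S1 : Set (ℝ × ℝ) := {p | p.1 ^ 2 + p.2 ^ 2 = 1}

/-- The ordered configuration space of two distinct points on the circle. -/
abbrev Conf2S1 : Type :=
  {p : (ℝ × ℝ) × (ℝ × ℝ) // p.1 ∈ S1 ∧ p.2 ∈ S1 ∧ p.1 ≠ p.2}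

/-- The moving vector `(1-t)·b - t·a`. -/
def dvec (p : Conf2S1 × unitInterval) : ℝ × ℝ :=
  ((1 - p.2.val) * p.1.val.2.1 - p.2.val * p.1.val.1.1,
   (1 - p.2.val) * p.1.val.2.2 - p.2.val * p.1.val.1.2)

lemma key_pos (a1 a2 b1 b2 s : ℝ) (ha : a1 ^ 2 + a2 ^ 2 = 1) (hb : b1 ^ 2 + b2 ^ 2 = 1)
    (hs0 : 0 ≤ s) (hs1 : s ≤ 1) (hne : (a1, a2) ≠ (b1, b2)) :
    0 < ((1 - s) * b1 - s * a1) ^ 2 + ((1 - s) * b2 - s * a2) ^ 2 := by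
  rcases eq_or_lt_of_le (by positivity : (0:ℝ) ≤ ((1 - s) * b1 - s * a1) ^ 2 + ((1 - s) * b2 - s * a2) ^ 2) with h | h
  · exfalso
    have h1 : (1 - s) * b1 - s * a1 = 0 := by nlinarith [sq_nonneg ((1 - s) * b1 - s * a1), sq_nonneg ((1 - s) * b2 - s * a2)]
    have h2 : (1 - s) * b2 - s * a2 = 0 := by nlinarith [sq_nonneg ((1 - s) * b1 - s * a1), sq_nonneg ((1 - s) * b2 - s * a2)]
    have hsq : (1 - 2 * s : ℝ) = 0 := by
      linear_combination (-(1 - s) ^ 2) * hb + s ^ 2 * ha + ((1 - s) * b1 + s * a1) * h1 + ((1 - s) * b2 + s * a2) * h2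
    have hs : s = 1 / 2 := by linarith
    subst hs
    have hb1 : b1 = a1 := by linarith
    have hb2 : b2 = a2 := by linarith
    exact hne (by rw [hb1, hb2])
  · exact h

lemma dvec_pos (p : Conf2S1 × unitInterval) : 0 < (dvec p).1 ^ 2 + (dvec p).2 ^ 2 := by
  have h := key_pos p.1.val.1.1 p.1.val.1.2 p.1.val.2.1 p.1.val.2.2 p.2.val
    p.1.prop.1 p.1.prop.2.1 p.2.prop.1 p.2.prop.2
    (by simpa using p.1.prop.2.2)
  simpa [dvec] using h

/-- Norm of the moving vector. -/
noncomputable def nrm (p : Conf2S1 × unitInterval) : ℝ := Real.sqrt ((dvec p).1 ^ 2 + (dvec p).2 ^ 2)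

lemma nrm_pos (p : Conf2S1 × unitInterval) : 0 < nrm p := Real.sqrt_pos.mpr (dvec_pos p)

lemma nrm_sq (p : Conf2S1 × unitInterval) : nrm p ^ 2 = (dvec p).1 ^ 2 + (dvec p).2 ^ 2 :=
  Real.sq_sqrt (dvec_pos p).le

lemma key_ne (a1 a2 b1 b2 s n : ℝ) (ha : a1 ^ 2 + a2 ^ 2 = 1) (hb : b1 ^ 2 + b2 ^ 2 = 1)
    (hs0 : 0 ≤ s) (hs1 : s ≤ 1) (hn : 0 < n)
    (h1 : (1 - s) * b1 - s * a1 = n * a1) (h2 : (1 - s) * b2 - s * a2 = n * a2)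
    (hne : (a1, a2) ≠ (b1, b2)) : False := by
  have e1 : (1 - s) * b1 = (s + n) * a1 := by linarith [h1]
  have e2 : (1 - s) * b2 = (s + n) * a2 := by linarith [h2]
  have hsq : (1 - s) ^ 2 = (s + n) ^ 2 := by
    linear_combination (-(1 - s) ^ 2) * hb + (s + n) ^ 2 * ha + ((1 - s) * b1 + (s + n) * a1) * e1 + ((1 - s) * b2 + (s + n) * a2) * e2
  have hfac : ((1 - s) - (s + n)) * ((1 - s) + (s + n)) = 0 := by linear_combination hsq
  have hpos : (1 - s) + (s + n) > 0 := by linarith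
  have heq : 1 - s = s + n := by
    rcases mul_eq_zero.mp hfac with h | h
    · linarith
    · linarith
  have h1s : (0:ℝ) < 1 - s := by linarith
  have hb1 : b1 = a1 := by
    have : (1 - s) * b1 = (1 - s) * a1 := by rw [e1, heq]
    exact mul_left_cancel₀ h1s.ne' this
  have hb2 : b2 = a2 := by
    have : (1 - s) * b2 = (1 - s) * a2 := by rw [e2, heq]
    exact mul_left_cancel₀ h1s.ne' this
  exact hne (by rw [hb1, hb2])

/-- The underlying map of the deformation retraction. -/
noncomputable def Hmap (p : Conf2S1 × unitInterval) : Conf2S1 :=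
  ⟨(p.1.val.1, ((dvec p).1 / nrm p, (dvec p).2 / nrm p)), by
    refine ⟨p.1.prop.1, ?_, ?_⟩
    · show ((dvec p).1 / nrm p) ^ 2 + ((dvec p).2 / nrm p) ^ 2 = 1
      rw [div_pow, div_pow, ← add_div, nrm_sq]
      exact div_self (dvec_pos p).ne'
    · intro h
      have h1 : p.1.val.1.1 = (dvec p).1 / nrm p := congrArg Prod.fst h
      have h2 : p.1.val.1.2 = (dvec p).2 / nrm p := congrArg Prod.snd h
      have hn := nrm_pos p
      have e1 : (dvec p).1 = nrm p * p.1.val.1.1 := by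
        field_simp at h1; linarith
      have e2 : (dvec p).2 = nrm p * p.1.val.1.2 := by
        field_simp at h2; linarith
      refine key_ne p.1.val.1.1 p.1.val.1.2 p.1.val.2.1 p.1.val.2.2 p.2.val (nrm p)
        p.1.prop.1 p.1.prop.2.1 p.2.prop.1 p.2.prop.2 hn ?_ ?_
        (by simpa using p.1.prop.2.2)
      · simpa [dvec] using e1
      · simpa [dvec] using e2⟩

lemma Hmap_cont : Continuous Hmap := by
  have hv : Continuous dvec := by
    apply Continuous.prodMk <;> fun_prop
  have hn : Continuous nrm := by
    apply Real.continuous_sqrt.comp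
    fun_prop
  apply Continuous.subtype_mk
  apply Continuous.prodMk
  · fun_prop
  · exact Continuous.prodMk
      (Continuous.div (by fun_prop) hn fun p => (nrm_pos p).ne')
      (Continuous.div (by fun_prop) hn fun p => (nrm_pos p).ne')

theorem antipodal_circle_deformation_retract :
    ∃ H : C(Conf2S1 × unitInterval, Conf2S1),
      (∀ x, H (x, 0) = x) ∧
      (∀ x, (H (x, 1)).val.2 = -(H (x, 1)).val.1) ∧
      (∀ x : Conf2S1, x.val.2 = -x.val.1 → ∀ t, H (x, t) = x) := by
  refine ⟨⟨Hmap, Hmap_cont⟩, ?_, ?_, ?_⟩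
  · intro x
    have hv : dvec (x, 0) = x.val.2 := by
      simp [dvec]
    have hn : nrm (x, 0) = 1 := by
      rw [nrm, hv]
      rw [x.prop.2.1]
      exact Real.sqrt_one
    apply Subtype.ext
    show (x.val.1, ((dvec (x,0)).1 / nrm (x,0), (dvec (x,0)).2 / nrm (x,0))) = x.val
    rw [hv, hn]
    simp
  · intro x
    have hv : dvec (x, 1) = -x.val.1 := by
      refine Prod.ext_iff.mpr ⟨?_, ?_⟩ <;> simp [dvec] <;> ring
    have hn : nrm (x, 1) = 1 := by
      rw [nrm, hv]
      have : (-x.val.1).1 ^ 2 + (-x.val.1).2 ^ 2 = 1 := by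
        simp only [Prod.fst_neg, Prod.snd_neg, neg_sq]; exact x.prop.1
      rw [this]
      exact Real.sqrt_one
    show ((dvec (x,1)).1 / nrm (x,1), (dvec (x,1)).2 / nrm (x,1)) = -x.val.1
    rw [hv, hn]
    simp only [div_one]
  · intro x hx t
    have hb1 : x.val.2.1 = -x.val.1.1 := by rw [hx]; rfl
    have hb2 : x.val.2.2 = -x.val.1.2 := by rw [hx]; rfl
    have hv : dvec (x, t) = x.val.2 := by
      refine Prod.ext_iff.mpr ⟨?_, ?_⟩ <;> simp only [dvec, hb1, hb2] <;> ring
    have hn : nrm (x, t) = 1 := by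
      rw [nrm, hv, x.prop.2.1]
      exact Real.sqrt_one
    apply Subtype.ext
    show (x.val.1, ((dvec (x,t)).1 / nrm (x,t), (dvec (x,t)).2 / nrm (x,t))) = x.val
    rw [hv, hn]
    simp
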